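/- Let T > 0 and let γ satisfy property (⋆) with exponent δ ∈ [0,2). Then for every integer k ≥ 1, the Fourier coefficient c_k(γ) = (2/T)·∫₀^T γ(t)·cos(kπt/T) dt satisfies c_k(γ) ≤ 0. -/

import Mathlib

open MeasureTheory Real Filter Set intervalIntegral Topology

/-- Property (⋆): `γ` is continuously differentiable (with derivative `γ'`), increasing and
concave on `(0, T]`, and `x ^ δ * γ' x` is nonnegative and bounded near `0⁺`. -/
def PropertyStar (T δ : ℝ) (γ γ' : ℝ → ℝ) : Prop :=
  (∀ x ∈ Set.Ioc (0 : ℝ) T, HasDerivWithinAt γ (γ' x) (Set.Ioc (0 : ℝ) T) x) ∧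
  ContinuousOn γ' (Set.Ioc (0 : ℝ) T) ∧
  MonotoneOn γ (Set.Ioc (0 : ℝ) T) ∧
  ConcaveOn ℝ (Set.Ioc (0 : ℝ) T) γ ∧
  ∃ M > (0 : ℝ), ∃ ε > (0 : ℝ), ∀ x ∈ Set.Ioo (0 : ℝ) ε, 0 ≤ x ^ δ * γ' x ∧ x ^ δ * γ' x ≤ M


private lemma aux_alt_sum : ∀ (m : ℕ) (A : ℕ → ℝ),
    (∀ i, i + 1 < m → A (i+1) ≤ A i) → (∀ i, i < m → 0 ≤ A i) →
    0 ≤ ∑ j ∈ Finset.range m, (-1:ℝ)^j * A j := by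
  intro m
  induction m using Nat.strong_induction_on with
  | _ m ih =>
    match m with
    | 0 => intro A _ _; simp
    | 1 => intro A _ h0; simpa using h0 0 one_pos
    | (m+2) =>
      intro A hA h0
      have key : ∑ j ∈ Finset.range (m+2), (-1:ℝ)^j * A j
          = (A 0 - A 1) + ∑ j ∈ Finset.range m, (-1:ℝ)^j * A (j+2) := by
        rw [Finset.sum_range_succ' (fun j => (-1:ℝ)^j * A j) (m+1),
          Finset.sum_range_succ' (fun j => (-1:ℝ)^(j+1) * A (j+1)) m]
        have : ∀ j, (-1:ℝ)^(j+1+1) * A (j+1+1) = (-1:ℝ)^j * A (j+2) := by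
          intro j; rw [pow_succ, pow_succ]; ring_nf
        simp only [this]
        ring
      rw [key]
      have h1 : 0 ≤ A 0 - A 1 := sub_nonneg.2 (hA 0 (by omega))
      have h2 := ih m (by omega) (fun i => A (i+2)) (fun i hi => hA (i+2) (by omega))
        (fun i hi => h0 (i+2) (by omega))
      linarith

private lemma aux_slope_tendsto {T : ℝ} {γ γ' : ℝ → ℝ}
    (hd : ∀ x ∈ Set.Ioc (0:ℝ) T, HasDerivWithinAt γ (γ' x) (Set.Ioc (0:ℝ) T) x)
    {x : ℝ} (hx : x ∈ Set.Ioc (0:ℝ) T) {u : Set ℝ} (hu : u ⊆ Set.Ioc (0:ℝ) T \ {x}) :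
    Tendsto (slope γ x) (𝓝[u] x) (𝓝 (γ' x)) :=
  (hasDerivWithinAt_iff_tendsto_slope.1 (hd x hx)).mono_left (nhdsWithin_mono x hu)

private lemma aux_deriv_nonneg {T : ℝ} {γ γ' : ℝ → ℝ} (hT : 0 < T)
    (hd : ∀ x ∈ Set.Ioc (0:ℝ) T, HasDerivWithinAt γ (γ' x) (Set.Ioc (0:ℝ) T) x)
    (hmono : MonotoneOn γ (Set.Ioc (0:ℝ) T)) :
    ∀ x ∈ Set.Ioc (0:ℝ) T, 0 ≤ γ' x := by
  intro x hx
  have hsub : Set.Ioo (0:ℝ) x ⊆ Set.Ioc (0:ℝ) T \ {x} := fun z hz =>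
    ⟨⟨hz.1, hz.2.le.trans hx.2⟩, ne_of_lt hz.2⟩
  have hne : (𝓝[Set.Ioo (0:ℝ) x] x).NeBot := right_nhdsWithin_Ioo_neBot hx.1
  refine ge_of_tendsto (aux_slope_tendsto hd hx hsub) ?_
  filter_upwards [eventually_mem_nhdsWithin] with z hz
  rw [slope_def_field]
  refine div_nonneg_iff.2 (Or.inr ⟨?_, ?_⟩)
  · exact sub_nonpos.2 (hmono ⟨hz.1, hz.2.le.trans hx.2⟩ hx hz.2.le)
  · linarith [hz.2]

private lemma aux_deriv_anti {T : ℝ} {γ γ' : ℝ → ℝ} (hT : 0 < T)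
    (hd : ∀ x ∈ Set.Ioc (0:ℝ) T, HasDerivWithinAt γ (γ' x) (Set.Ioc (0:ℝ) T) x)
    (hconc : ConcaveOn ℝ (Set.Ioc (0:ℝ) T) γ) :
    ∀ x ∈ Set.Ioc (0:ℝ) T, ∀ y ∈ Set.Ioc (0:ℝ) T, x < y → γ' y ≤ γ' x := by
  intro x hx y hy hxy
  have hcv : ConvexOn ℝ (Set.Ioc (0:ℝ) T) (fun t => -γ t) := hconc.neg
  have key1 : (γ y - γ x) / (y - x) ≤ γ' x := by
    have hsub : Set.Ioo (0:ℝ) x ⊆ Set.Ioc (0:ℝ) T \ {x} := fun z hz =>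
      ⟨⟨hz.1, hz.2.le.trans hx.2⟩, ne_of_lt hz.2⟩
    have hne : (𝓝[Set.Ioo (0:ℝ) x] x).NeBot := right_nhdsWithin_Ioo_neBot hx.1
    refine ge_of_tendsto (aux_slope_tendsto hd hx hsub) ?_
    filter_upwards [eventually_mem_nhdsWithin] with z hz
    have hz' : z ∈ Set.Ioc (0:ℝ) T := ⟨hz.1, hz.2.le.trans hx.2⟩
    have := hcv.secant_mono hx hz' hy (ne_of_lt hz.2) (ne_of_gt hxy) (hz.2.le.trans hxy.le)
    rw [slope_def_field]
    have h1 : (-γ z - -γ x) / (z - x) = -((γ z - γ x)/(z - x)) := by ring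
    have h2 : (-γ y - -γ x) / (y - x) = -((γ y - γ x)/(y - x)) := by ring
    rw [h1, h2] at this
    linarith
  have key2 : γ' y ≤ (γ y - γ x) / (y - x) := by
    have hsub : Set.Ioo x y ⊆ Set.Ioc (0:ℝ) T \ {y} := fun z hz =>
      ⟨⟨hx.1.trans hz.1, hz.2.le.trans hy.2⟩, ne_of_lt hz.2⟩
    have hne : (𝓝[Set.Ioo x y] y).NeBot := right_nhdsWithin_Ioo_neBot hxy
    refine le_of_tendsto (aux_slope_tendsto hd hy hsub) ?_
    filter_upwards [eventually_mem_nhdsWithin] with z hz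
    have hz' : z ∈ Set.Ioc (0:ℝ) T := ⟨hx.1.trans hz.1, hz.2.le.trans hy.2⟩
    have := hcv.secant_mono hy hx hz' (ne_of_lt hxy) (ne_of_lt hz.2) hz.1.le
    rw [slope_def_field]
    have hne1 : x - y ≠ 0 := sub_ne_zero.2 (ne_of_lt hxy)
    have hne2 : y - x ≠ 0 := sub_ne_zero.2 (ne_of_gt hxy)
    have h1 : (-γ x - -γ y) / (x - y) = -((γ y - γ x)/(y - x)) := by
      field_simp; ring
    have h2 : (-γ z - -γ y) / (z - y) = -((γ z - γ y)/(z - y)) := by ring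
    rw [h1, h2] at this
    linarith
  linarith

private lemma aux_Cbound {T δ M ε₀ : ℝ} {γ' : ℝ → ℝ} (hT : 0 < T) (hδ0 : 0 ≤ δ)
    (hanti : ∀ x ∈ Set.Ioc (0:ℝ) T, ∀ y ∈ Set.Ioc (0:ℝ) T, x < y → γ' y ≤ γ' x)
    (hM : 0 < M) (hε : 0 < ε₀)
    (hMb : ∀ x ∈ Set.Ioo (0:ℝ) ε₀, 0 ≤ x ^ δ * γ' x ∧ x ^ δ * γ' x ≤ M) :
    ∃ C > 0, ∀ x ∈ Set.Ioc (0:ℝ) T, γ' x ≤ C * x ^ (-δ) := by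
  set b : ℝ := min ε₀ T / 2 with hbdef
  have hb0 : 0 < b := by positivity
  have hbε : b < ε₀ := by
    have : min ε₀ T ≤ ε₀ := min_le_left _ _
    rw [hbdef]; linarith
  have hbT : b < T := by
    have : min ε₀ T ≤ T := min_le_right _ _
    rw [hbdef]; linarith
  have hbIoc : b ∈ Set.Ioc (0:ℝ) T := ⟨hb0, hbT.le⟩
  have hbpow : (0:ℝ) < b ^ δ := rpow_pos_of_pos hb0 δ
  have hγb : γ' b ≤ M * b ^ (-δ) := by
    have h1 := (hMb b ⟨hb0, hbε⟩).2
    rw [Real.rpow_neg hb0.le]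
    rw [mul_comm] at h1
    calc γ' b = γ' b * b ^ δ * (b ^ δ)⁻¹ := by field_simp
    _ ≤ M * (b ^ δ)⁻¹ := by
        apply mul_le_mul_of_nonneg_right h1 (by positivity)
  refine ⟨M * (T / b) ^ δ, by positivity, ?_⟩
  have hMC : M ≤ M * (T / b) ^ δ := by
    nth_rewrite 1 [← mul_one M]
    apply mul_le_mul_of_nonneg_left _ hM.le
    calc (1:ℝ) = 1 ^ δ := (Real.one_rpow δ).symm
    _ ≤ (T / b) ^ δ := Real.rpow_le_rpow zero_le_one (by rw [le_div_iff₀ hb0]; linarith) hδ0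
  intro x hx
  rcases lt_or_ge x ε₀ with hxε | hxε
  · have h1 := (hMb x ⟨hx.1, hxε⟩).2
    have hxpow : (0:ℝ) < x ^ δ := rpow_pos_of_pos hx.1 δ
    have h2 : γ' x ≤ M * x ^ (-δ) := by
      rw [Real.rpow_neg hx.1.le]
      rw [mul_comm] at h1
      calc γ' x = γ' x * x ^ δ * (x ^ δ)⁻¹ := by field_simp
      _ ≤ M * (x ^ δ)⁻¹ := mul_le_mul_of_nonneg_right h1 (by positivity)
    exact h2.trans (mul_le_mul_of_nonneg_right hMC (Real.rpow_nonneg hx.1.le _))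
  · have hbx : b < x := hbε.trans_le hxε
    have h1 : γ' x ≤ γ' b := hanti b hbIoc x hx hbx
    have h2 : (T:ℝ) ^ (-δ) ≤ x ^ (-δ) :=
      Real.rpow_le_rpow_of_nonpos hx.1 hx.2 (neg_nonpos.2 hδ0)
    have hkey : (T / b) ^ δ * T ^ (-δ) = b ^ (-δ) := by
      rw [Real.div_rpow hT.le hb0.le, Real.rpow_neg hT.le, Real.rpow_neg hb0.le]
      field_simp
    calc γ' x ≤ γ' b := h1
    _ ≤ M * b ^ (-δ) := hγb
    _ = M * (T / b) ^ δ * T ^ (-δ) := by rw [mul_assoc, hkey]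
    _ ≤ M * (T / b) ^ δ * x ^ (-δ) := mul_le_mul_of_nonneg_left h2 (by positivity)

private lemma aux_gbound {T δ C ω : ℝ} {γ' : ℝ → ℝ} (hω : 0 < ω) (hC : 0 < C)
    (hγ'0 : ∀ x ∈ Set.Ioc (0:ℝ) T, 0 ≤ γ' x)
    (hCb : ∀ x ∈ Set.Ioc (0:ℝ) T, γ' x ≤ C * x ^ (-δ)) :
    ∀ t ∈ Set.Ioc (0:ℝ) T, |γ' t * Real.sin (ω * t)| ≤ C * ω * t ^ (1 - δ) := by
  intro t ht
  have ht0 : 0 < t := ht.1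
  have h1 : |γ' t * Real.sin (ω * t)| = γ' t * |Real.sin (ω * t)| := by
    rw [abs_mul, abs_of_nonneg (hγ'0 t ht)]
  rw [h1]
  have h2 : |Real.sin (ω * t)| ≤ ω * t := by
    calc |Real.sin (ω * t)| ≤ |ω * t| := Real.abs_sin_le_abs
    _ = ω * t := abs_of_nonneg (by positivity)
  have h3 : γ' t * |Real.sin (ω * t)| ≤ (C * t ^ (-δ)) * (ω * t) :=
    mul_le_mul (hCb t ht) h2 (abs_nonneg _)
      (by positivity)
  refine h3.trans (le_of_eq ?_)
  have : t ^ (-δ) * t = t ^ (1 - δ) := by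
    rw [show (1 - δ) = -δ + 1 by ring, Real.rpow_add ht0, Real.rpow_one]
  calc (C * t ^ (-δ)) * (ω * t) = C * ω * (t ^ (-δ) * t) := by ring
  _ = C * ω * t ^ (1-δ) := by rw [this]

private lemma aux_gint {T δ C ω : ℝ} {γ' : ℝ → ℝ} (hT : 0 < T) (hδ : δ < 2) (hω : 0 < ω)
    (hC : 0 < C)
    (hcont' : ContinuousOn γ' (Set.Ioc (0:ℝ) T))
    (hγ'0 : ∀ x ∈ Set.Ioc (0:ℝ) T, 0 ≤ γ' x)
    (hCb : ∀ x ∈ Set.Ioc (0:ℝ) T, γ' x ≤ C * x ^ (-δ)) :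
    IntervalIntegrable (fun t => γ' t * Real.sin (ω * t)) volume 0 T := by
  rw [intervalIntegrable_iff_integrableOn_Ioc_of_le hT.le]
  have hmeas : ContinuousOn (fun t => γ' t * Real.sin (ω * t)) (Set.Ioc (0:ℝ) T) :=
    hcont'.mul ((Real.continuous_sin.comp (continuous_const.mul continuous_id)).continuousOn)
  have hbd : IntegrableOn (fun t => C * ω * t ^ (1 - δ)) (Set.Ioc (0:ℝ) T) volume := by
    have h1 : IntervalIntegrable (fun t : ℝ => t ^ (1 - δ)) volume 0 T :=
      intervalIntegrable_rpow' (by linarith)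
    have h2 := h1.const_mul (C * ω)
    rwa [intervalIntegrable_iff_integrableOn_Ioc_of_le hT.le] at h2
  refine Integrable.mono' hbd (hmeas.aestronglyMeasurable measurableSet_Ioc) ?_
  rw [ae_restrict_iff' measurableSet_Ioc]
  exact ae_of_all _ fun t ht => by
    simpa [Real.norm_eq_abs, ← abs_mul] using aux_gbound hω hC hγ'0 hCb t ht

private lemma aux_pos {T : ℝ} {γ' : ℝ → ℝ} {k : ℕ} (hT : 0 < T) (hk : 1 ≤ k)
    (hγ'0 : ∀ x ∈ Set.Ioc (0:ℝ) T, 0 ≤ γ' x)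
    (hanti : ∀ x ∈ Set.Ioc (0:ℝ) T, ∀ y ∈ Set.Ioc (0:ℝ) T, x < y → γ' y ≤ γ' x)
    (hgI : IntervalIntegrable (fun t => γ' t * Real.sin (k * π / T * t)) volume 0 T) :
    0 ≤ ∫ t in (0:ℝ)..T, γ' t * Real.sin (k * π / T * t) := by
  have hπ := Real.pi_pos
  have hk0 : (0:ℝ) < k := by exact_mod_cast hk
  set ω : ℝ := k * π / T with hωdef
  have hω : 0 < ω := by positivity
  set L : ℝ := T / k with hLdef
  have hL : 0 < L := by positivity
  have hkne : (k:ℝ) ≠ 0 := ne_of_gt hk0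
  have hTne : T ≠ 0 := ne_of_gt hT
  have hkL : (k:ℝ) * L = T := by rw [hLdef]; field_simp
  have hωL : ω * L = π := by
    rw [hωdef, hLdef]
    field_simp
  set g : ℝ → ℝ := fun t => γ' t * Real.sin (ω * t) with hgdef
  -- members of [0,T]
  have hmem : ∀ j : ℕ, j ≤ k → (j:ℝ) * L ∈ Set.uIcc (0:ℝ) T := by
    intro j hj
    rw [Set.uIcc_of_le hT.le]
    constructor
    · positivity
    · calc (j:ℝ) * L ≤ (k:ℝ) * L := by
            apply mul_le_mul_of_nonneg_right _ hL.le
            exact_mod_cast hj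
      _ = T := hkL
  have hint : ∀ j : ℕ, j < k → IntervalIntegrable g volume ((j:ℝ)*L) (((j:ℝ)+1)*L) := by
    intro j hj
    apply hgI.mono_set
    apply Set.uIcc_subset_uIcc (hmem j hj.le)
    have : ((j:ℝ)+1) = ((j+1 : ℕ) : ℝ) := by push_cast; ring
    rw [this]
    exact hmem (j+1) hj
  have H := intervalIntegral.sum_integral_adjacent_intervals
      (a := fun j : ℕ => (j:ℝ) * L) (μ := volume) (f := g) (n := k)
      (fun j hj => by
        have := hint j hj
        have he : ((j:ℝ)+1) = ((j+1 : ℕ) : ℝ) := by push_cast; ring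
        rwa [he] at this)
  have hsum : ∫ t in (0:ℝ)..T, g t
      = ∑ j ∈ Finset.range k, ∫ t in ((j:ℝ)*L)..(((j:ℝ)+1)*L), g t := by
    calc ∫ t in (0:ℝ)..T, g t = ∫ t in (((0:ℕ)):ℝ)*L..((k:ℕ):ℝ)*L, g t := by
          norm_num [hkL]
    _ = ∑ j ∈ Finset.range k, ∫ t in ((j:ℝ)*L)..(((j+1:ℕ)):ℝ)*L, g t := H.symm
    _ = ∑ j ∈ Finset.range k, ∫ t in ((j:ℝ)*L)..(((j:ℝ)+1)*L), g t := by
          apply Finset.sum_congr rfl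
          intro j _
          congr 1
          push_cast; ring
  -- shift each piece
  set A : ℕ → ℝ := fun j => ∫ t in (0:ℝ)..L, γ' (t + j*L) * Real.sin (ω * t) with hAdef
  have hshift : ∀ j : ℕ, ∀ t : ℝ, g (t + j*L) = (-1:ℝ)^j * (γ' (t + j*L) * Real.sin (ω * t)) := by
    intro j t
    have harg : ω * (t + j*L) = ω*t + j*π := by rw [← hωL]; ring
    rw [hgdef]
    simp only
    rw [harg, Real.sin_add_nat_mul_pi]
    ring
  have hAint : ∀ j : ℕ, j < k →
      IntervalIntegrable (fun t => γ' (t + j*L) * Real.sin (ω * t)) volume 0 L := by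
    intro j hj
    have h1 := (hint j hj).comp_add_right ((j:ℝ)*L)
    have e1 : (j:ℝ)*L - (j:ℝ)*L = 0 := by ring
    have e2 : ((j:ℝ)+1)*L - (j:ℝ)*L = L := by ring
    rw [e1, e2] at h1
    have h2 := h1.const_mul ((-1:ℝ)^j)
    have e3 : (fun t => ((-1:ℝ)^j) * g (t + (j:ℝ)*L))
        = fun t => γ' (t + j*L) * Real.sin (ω * t) := by
      funext t
      rw [hshift j t, ← mul_assoc, ← pow_add]
      rw [Even.neg_one_pow ⟨j, by ring⟩, one_mul]
    rwa [e3] at h2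
  have hpiece : ∀ j : ℕ, j < k →
      ∫ t in ((j:ℝ)*L)..(((j:ℝ)+1)*L), g t = (-1:ℝ)^j * A j := by
    intro j hj
    have h1 : ∫ t in (0:ℝ)..L, g (t + (j:ℝ)*L)
        = ∫ t in ((0:ℝ)+(j:ℝ)*L)..(L+(j:ℝ)*L), g t :=
      intervalIntegral.integral_comp_add_right g ((j:ℝ)*L)
    have e1 : (0:ℝ)+(j:ℝ)*L = (j:ℝ)*L := by ring
    have e2 : L+(j:ℝ)*L = ((j:ℝ)+1)*L := by ring
    rw [e1, e2] at h1
    rw [← h1]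
    calc ∫ t in (0:ℝ)..L, g (t + (j:ℝ)*L)
        = ∫ t in (0:ℝ)..L, (-1:ℝ)^j * (γ' (t + j*L) * Real.sin (ω * t)) := by
          apply intervalIntegral.integral_congr
          intro t _
          exact hshift j t
    _ = (-1:ℝ)^j * A j := by
          rw [hAdef]
          exact intervalIntegral.integral_const_mul _ _
  -- nonneg and antitone of A
  have hsin : ∀ t ∈ Set.Icc (0:ℝ) L, 0 ≤ Real.sin (ω * t) := by
    intro t ht
    apply Real.sin_nonneg_of_nonneg_of_le_pi (mul_nonneg hω.le ht.1)
    rw [← hωL]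
    exact mul_le_mul_of_nonneg_left ht.2 hω.le
  have hA0 : ∀ j, j < k → 0 ≤ A j := by
    intro j hj
    apply intervalIntegral.integral_nonneg hL.le
    intro t ht
    rcases eq_or_lt_of_le ht.1 with h | h
    · simp [← h]
    · apply mul_nonneg _ (hsin t ht)
      apply hγ'0
      constructor
      · positivity
      · calc t + (j:ℝ)*L ≤ L + (j:ℝ)*L := by linarith [ht.2]
        _ = ((j:ℝ)+1) * L := by ring
        _ ≤ (k:ℝ) * L := by
              apply mul_le_mul_of_nonneg_right _ hL.le
              have : (j:ℕ) + 1 ≤ k := hj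
              exact_mod_cast this
        _ = T := hkL
  have hAanti : ∀ j, j + 1 < k → A (j+1) ≤ A j := by
    intro j hj
    apply intervalIntegral.integral_mono_on hL.le (hAint (j+1) hj) (hAint j (by omega))
    intro t ht
    rcases eq_or_lt_of_le ht.1 with h | h
    · simp [← h]
    · apply mul_le_mul_of_nonneg_right _ (hsin t ht)
      have hmem1 : t + (j:ℝ)*L ∈ Set.Ioc (0:ℝ) T := by
        constructor
        · positivity
        · calc t + (j:ℝ)*L ≤ L + (j:ℝ)*L := by linarith [ht.2]
          _ = ((j:ℝ)+1) * L := by ring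
          _ ≤ (k:ℝ) * L := by
                apply mul_le_mul_of_nonneg_right _ hL.le
                have : (j:ℕ) + 1 ≤ k := by omega
                exact_mod_cast this
          _ = T := hkL
      have hmem2 : t + ((j:ℕ)+1:ℝ)*L ∈ Set.Ioc (0:ℝ) T := by
        constructor
        · positivity
        · calc t + ((j:ℝ)+1)*L ≤ L + ((j:ℝ)+1)*L := by linarith [ht.2]
          _ = ((j:ℝ)+2) * L := by ring
          _ ≤ (k:ℝ) * L := by
                apply mul_le_mul_of_nonneg_right _ hL.le
                have : (j:ℕ) + 2 ≤ k := by omega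
                exact_mod_cast this
          _ = T := hkL
      have := hanti _ hmem1 _ hmem2 (by nlinarith [hL])
      convert this using 2
      · rfl
      · simp
  have := aux_alt_sum k A hAanti hA0
  calc (0:ℝ) ≤ ∑ j ∈ Finset.range k, (-1:ℝ)^j * A j := this
  _ = ∑ j ∈ Finset.range k, ∫ t in ((j:ℝ)*L)..(((j:ℝ)+1)*L), g t := by
        apply Finset.sum_congr rfl
        intro j hj
        exact (hpiece j (Finset.mem_range.1 hj)).symm
  _ = ∫ t in (0:ℝ)..T, g t := hsum.symm

/-- under property (⋆) with exponent `δ ∈ [0, 2)`, the Fourier coefficients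
`c_k(γ) = (2/T) ∫₀ᵀ γ(t) cos(kπt/T) dt` are nonpositive for every `k ≥ 1`. -/
theorem fourier_coefficients_nonpositive
    (T δ : ℝ) (hT : 0 < T) (hδ : δ ∈ Set.Ico (0 : ℝ) 2)
    (γ γ' : ℝ → ℝ) (hstar : PropertyStar T δ γ γ') :
    ∀ k : ℕ, 1 ≤ k →
      (2 / T) * ∫ t in (0 : ℝ)..T, γ t * Real.cos (k * π * t / T) ≤ 0 := by
  obtain ⟨hderiv, hcont', hmono, hconc, M, hM, ε₀, hε₀, hMb⟩ := hstar
  intro k hk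
  have hπ := Real.pi_pos
  have hk0 : (0:ℝ) < k := by exact_mod_cast hk
  have hTne : T ≠ 0 := ne_of_gt hT
  set ω : ℝ := k * π / T with hωdef
  have hω : 0 < ω := by positivity
  have hωne : ω ≠ 0 := ne_of_gt hω
  have harg : ∀ t : ℝ, (k:ℝ) * π * t / T = ω * t := fun t => by rw [hωdef]; ring
  simp only [harg]
  -- derivative facts
  have hγ'0 := aux_deriv_nonneg hT hderiv hmono
  have hanti := aux_deriv_anti hT hderiv hconc
  obtain ⟨C, hC, hCb⟩ := aux_Cbound hT hδ.1 hanti hM hε₀ hMb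
  have hgbd := aux_gbound (γ' := γ') (T := T) (δ := δ) hω hC hγ'0 hCb
  have hgI : IntervalIntegrable (fun t => γ' t * Real.sin (ω * t)) volume 0 T :=
    aux_gint hT hδ.2 hω hC hcont' hγ'0 hCb
  set g : ℝ → ℝ := fun t => γ' t * Real.sin (ω * t) with hgdef
  have hγc : ContinuousOn γ (Set.Ioc (0:ℝ) T) := fun x hx => (hderiv x hx).continuousWithinAt
  -- suffices to show the integral is nonpositive
  suffices hI : (∫ t in (0:ℝ)..T, γ t * Real.cos (ω * t)) ≤ 0 by
    have h2T : (0:ℝ) ≤ 2 / T := by positivity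
    have := mul_le_mul_of_nonneg_left hI h2T
    simpa using this
  by_cases hInt : IntervalIntegrable (fun t => γ t * Real.cos (ω * t)) volume 0 T
  swap
  · rw [intervalIntegral.integral_undef hInt]
  -- main case
  set l : Filter ℝ := 𝓝[Set.Ioc (0:ℝ) T] (0:ℝ) with hldef
  have hlne : l.NeBot := by
    rw [hldef]
    apply mem_closure_iff_nhdsWithin_neBot.1
    rw [closure_Ioc (ne_of_lt hT)]
    exact ⟨le_refl 0, hT.le⟩
  have hbdry : Tendsto (fun a => γ a * Real.sin (ω*a)) l (𝓝 0) := by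
    set K : ℝ := T ^ (1-δ/2) / (1-δ/2) with hKdef
    have hδ2 : 0 < 1 - δ/2 := by have := hδ.2; linarith
    have hrint : ∀ a ∈ Set.Ioc (0:ℝ) T, ∀ c : ℝ,
        IntervalIntegrable (fun t : ℝ => t ^ c) volume a T := by
      intro a ha c
      apply ContinuousOn.intervalIntegrable
      intro t ht
      rw [Set.uIcc_of_le ha.2] at ht
      exact (Real.continuousAt_rpow_const t c
        (Or.inl (ne_of_gt (lt_of_lt_of_le ha.1 ht.1)))).continuousWithinAt
    have hγ'int : ∀ a ∈ Set.Ioc (0:ℝ) T, IntervalIntegrable γ' volume a T := by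
      intro a ha
      apply ContinuousOn.intervalIntegrable
      rw [Set.uIcc_of_le ha.2]
      exact hcont'.mono (fun x hx => ⟨lt_of_lt_of_le ha.1 hx.1, hx.2⟩)
    have hFTC : ∀ a ∈ Set.Ioc (0:ℝ) T, γ T - γ a = ∫ t in a..T, γ' t := by
      intro a ha
      symm
      apply intervalIntegral.integral_eq_sub_of_hasDeriv_right_of_le ha.2
      · exact hγc.mono (fun x hx => ⟨lt_of_lt_of_le ha.1 hx.1, hx.2⟩)
      · intro x hx
        have hx' : x ∈ Set.Ioc (0:ℝ) T := ⟨ha.1.trans hx.1, hx.2.le⟩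
        have hnb : Set.Ioc (0:ℝ) T ∈ 𝓝 x :=
          mem_of_superset (isOpen_Ioo.mem_nhds ⟨ha.1.trans hx.1, hx.2⟩) Set.Ioo_subset_Ioc_self
        exact ((hderiv x hx').hasDerivAt hnb).hasDerivWithinAt
      · exact hγ'int a ha
    have hBnd : ∀ a ∈ Set.Ioc (0:ℝ) T, ‖γ a * Real.sin (ω*a)‖
        ≤ |γ T| * |Real.sin (ω*a)| + (ω*C*K) * a ^ (1-δ/2) := by
      intro a ha
      have d1 : 0 ≤ γ T - γ a := sub_nonneg.2 (hmono ha ⟨hT, le_refl T⟩ ha.2)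
      have d2 : γ T - γ a ≤ C * ∫ t in a..T, t ^ (-δ) := by
        rw [hFTC a ha]
        calc (∫ t in a..T, γ' t) ≤ ∫ t in a..T, C * t ^ (-δ) := by
              apply intervalIntegral.integral_mono_on ha.2 (hγ'int a ha)
                ((hrint a ha (-δ)).const_mul C)
              intro t ht
              exact hCb t ⟨lt_of_lt_of_le ha.1 ht.1, ht.2⟩
        _ = C * ∫ t in a..T, t ^ (-δ) := intervalIntegral.integral_const_mul _ _
      have d3 : (∫ t in a..T, a * t ^ (-δ)) ≤ ∫ t in a..T, a ^ (1-δ/2) * t ^ (-δ/2) := by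
        apply intervalIntegral.integral_mono_on ha.2
          ((hrint a ha (-δ)).const_mul a) ((hrint a ha (-δ/2)).const_mul (a ^ (1-δ/2)))
        intro t ht
        have ht0 : 0 < t := lt_of_lt_of_le ha.1 ht.1
        have e1 : a = a ^ (1-δ/2) * a ^ (δ/2) := by
          rw [← Real.rpow_add ha.1, show (1-δ/2) + δ/2 = 1 by ring, Real.rpow_one]
        have e2 : t ^ (δ/2) * t ^ (-δ) = t ^ (-δ/2) := by
          rw [← Real.rpow_add ht0, show δ/2 + -δ = -δ/2 by ring]
        calc a * t ^ (-δ) = a ^ (1-δ/2) * (a ^ (δ/2) * t ^ (-δ)) := by rw [← mul_assoc, ← e1]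
        _ ≤ a ^ (1-δ/2) * (t ^ (δ/2) * t ^ (-δ)) := by
              apply mul_le_mul_of_nonneg_left _ (Real.rpow_nonneg ha.1.le _)
              exact mul_le_mul_of_nonneg_right
                (Real.rpow_le_rpow ha.1.le ht.1 (by linarith [hδ.1])) (Real.rpow_nonneg ht0.le _)
        _ = a ^ (1-δ/2) * t ^ (-δ/2) := by rw [e2]
      have d4 : (∫ t in a..T, t ^ (-δ/2)) ≤ K := by
        rw [integral_rpow (Or.inl (by linarith [hδ.2] : (-1:ℝ) < -δ/2))]
        rw [hKdef, show -δ/2 + 1 = 1 - δ/2 by ring]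
        have h9 : T ^ (1-δ/2) - a ^ (1-δ/2) ≤ T ^ (1-δ/2) := by
          have := Real.rpow_nonneg ha.1.le (1-δ/2); linarith
        exact (div_le_div_iff_of_pos_right hδ2).2 h9
      have d5 : (γ T - γ a) * a ≤ C * K * a ^ (1-δ/2) := by
        have e1 : (∫ t in a..T, a * t ^ (-δ)) = a * ∫ t in a..T, t ^ (-δ) :=
          intervalIntegral.integral_const_mul _ _
        have e2 : (∫ t in a..T, a ^ (1-δ/2) * t ^ (-δ/2))
            = a ^ (1-δ/2) * ∫ t in a..T, t ^ (-δ/2) := intervalIntegral.integral_const_mul _ _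
        have h6 : a * ∫ t in a..T, t ^ (-δ) ≤ a ^ (1-δ/2) * K := by
          rw [← e1]
          refine d3.trans ?_
          rw [e2]
          exact mul_le_mul_of_nonneg_left d4 (Real.rpow_nonneg ha.1.le _)
        calc (γ T - γ a) * a ≤ (C * ∫ t in a..T, t ^ (-δ)) * a := by
              apply mul_le_mul_of_nonneg_right d2 ha.1.le
        _ = C * (a * ∫ t in a..T, t ^ (-δ)) := by ring
        _ ≤ C * (a ^ (1-δ/2) * K) := mul_le_mul_of_nonneg_left h6 hC.le
        _ = C * K * a ^ (1-δ/2) := by ring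
      have d6 : |γ a| ≤ |γ T| + (γ T - γ a) := by
        have h7 : γ a ≤ γ T := hmono ha ⟨hT, le_refl T⟩ ha.2
        refine abs_le.2 ⟨?_, ?_⟩
        · have := neg_abs_le (γ T); linarith
        · have := le_abs_self (γ T); linarith
      have d7 : |Real.sin (ω*a)| ≤ ω * a := by
        calc |Real.sin (ω*a)| ≤ |ω*a| := Real.abs_sin_le_abs
        _ = ω * a := abs_of_nonneg (mul_nonneg hω.le ha.1.le)
      rw [Real.norm_eq_abs, abs_mul]
      calc |γ a| * |Real.sin (ω*a)| ≤ (|γ T| + (γ T - γ a)) * |Real.sin (ω*a)| :=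
            mul_le_mul_of_nonneg_right d6 (abs_nonneg _)
      _ = |γ T| * |Real.sin (ω*a)| + (γ T - γ a) * |Real.sin (ω*a)| := by ring
      _ ≤ |γ T| * |Real.sin (ω*a)| + (γ T - γ a) * (ω * a) := by
            have := mul_le_mul_of_nonneg_left d7 d1
            linarith
      _ ≤ |γ T| * |Real.sin (ω*a)| + (ω*C*K) * a ^ (1-δ/2) := by
            have : (γ T - γ a) * (ω * a) = ω * ((γ T - γ a) * a) := by ring
            rw [this]
            have := mul_le_mul_of_nonneg_left d5 hω.le
            nlinarith [this]
    apply squeeze_zero_norm' (f := fun a => γ a * Real.sin (ω*a))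
      (a := fun a => |γ T| * |Real.sin (ω*a)| + (ω*C*K) * a ^ (1-δ/2))
    · filter_upwards [eventually_mem_nhdsWithin] with a ha
      exact hBnd a ha
    · have t1 : Tendsto (fun a : ℝ => |γ T| * |Real.sin (ω*a)|) l (𝓝 0) := by
        have hc : Continuous (fun a : ℝ => |γ T| * |Real.sin (ω*a)|) := by
          apply Continuous.mul continuous_const
          exact (Real.continuous_sin.comp (continuous_const.mul continuous_id)).abs
        have := (hc.tendsto 0).mono_left (nhdsWithin_le_nhds (s := Set.Ioc (0:ℝ) T))
        simpa using this
      have t2 : Tendsto (fun a : ℝ => (ω*C*K) * a ^ (1-δ/2)) l (𝓝 0) := by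
        have hc := (Real.continuousAt_rpow_const 0 (1-δ/2) (Or.inr hδ2.le)).tendsto
        have h8 := (hc.mono_left (nhdsWithin_le_nhds (s := Set.Ioc (0:ℝ) T))).const_mul (ω*C*K)
        rw [Real.zero_rpow (ne_of_gt hδ2), mul_zero] at h8
        exact h8
      have := t1.add t2
      simpa using this
  -- integral of g on (0,a] tends to zero
  have hsmall : Tendsto (fun a => ∫ t in (0:ℝ)..a, g t) l (𝓝 0) := by
    have h2δ : (0:ℝ) < 2 - δ := by linarith [hδ.2]
    have hBnd : ∀ a ∈ Set.Ioc (0:ℝ) T, ‖∫ t in (0:ℝ)..a, g t‖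
        ≤ C * ω * a ^ (2-δ) / (2-δ) := by
      intro a ha
      have hbint : IntervalIntegrable (fun t : ℝ => C * ω * t ^ (1-δ)) volume 0 a :=
        (intervalIntegrable_rpow' (by linarith [hδ.2])).const_mul _
      have h1 : ‖∫ t in (0:ℝ)..a, g t‖ ≤ |∫ t in (0:ℝ)..a, C * ω * t ^ (1-δ)| := by
        apply intervalIntegral.norm_integral_le_abs_of_norm_le _ hbint
        rw [Set.uIoc_of_le ha.1.le, ae_restrict_iff' measurableSet_Ioc]
        apply ae_of_all
        intro t ht
        simpa [Real.norm_eq_abs, hgdef] using hgbd t ⟨ht.1, ht.2.trans ha.2⟩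
      have h2 : (∫ t in (0:ℝ)..a, C * ω * t ^ (1-δ)) = C * ω * a ^ (2-δ) / (2-δ) := by
        rw [intervalIntegral.integral_const_mul,
          integral_rpow (Or.inl (by linarith [hδ.2] : (-1:ℝ) < 1-δ))]
        rw [Real.zero_rpow (by linarith : (1-δ) + 1 ≠ 0),
          show (1-δ) + 1 = 2 - δ by ring]
        ring
      rw [h2] at h1
      refine h1.trans_eq (abs_of_nonneg ?_)
      have : (0:ℝ) ≤ a ^ (2-δ) := Real.rpow_nonneg ha.1.le _
      positivity
    apply squeeze_zero_norm' (a := fun a => C * ω * a ^ (2-δ) / (2-δ))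
    · filter_upwards [eventually_mem_nhdsWithin] with a ha
      exact hBnd a ha
    · have hc := (Real.continuousAt_rpow_const 0 (2-δ) (Or.inr h2δ.le)).tendsto
      have h8 := ((hc.mono_left (nhdsWithin_le_nhds (s := Set.Ioc (0:ℝ) T))).const_mul
        (C*ω)).div_const (2-δ)
      rw [Real.zero_rpow (ne_of_gt h2δ), mul_zero, zero_div] at h8
      exact h8
  -- integral of g on [a,T] tends to the full integral
  have hgtend : Tendsto (fun a => ∫ t in a..T, g t) l (𝓝 (∫ t in (0:ℝ)..T, g t)) := by
    have hev : ∀ᶠ a in l, (∫ t in (0:ℝ)..T, g t) - (∫ t in (0:ℝ)..a, g t) = ∫ t in a..T, g t := by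
      filter_upwards [eventually_mem_nhdsWithin] with a ha
      exact intervalIntegral.integral_interval_sub_left hgI
        (hgI.mono_set (Set.uIcc_subset_uIcc left_mem_uIcc
          (by rw [Set.uIcc_of_le hT.le]; exact ⟨ha.1.le, ha.2⟩)))
    have : Tendsto (fun a => (∫ t in (0:ℝ)..T, g t) - (∫ t in (0:ℝ)..a, g t)) l
        (𝓝 ((∫ t in (0:ℝ)..T, g t) - 0)) := tendsto_const_nhds.sub hsmall
    rw [sub_zero] at this
    exact this.congr' hev
  -- primitive of γ·cos tends to zero
  have hprim : Tendsto (fun a => ∫ t in (0:ℝ)..a, γ t * Real.cos (ω*t)) l (𝓝 0) := by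
    have hco := intervalIntegral.continuousOn_primitive_interval' hInt
      (left_mem_uIcc (a := (0:ℝ)) (b := T))
    have h0 : ContinuousWithinAt (fun b => ∫ t in (0:ℝ)..b, γ t * Real.cos (ω*t))
        (Set.uIcc (0:ℝ) T) 0 := hco 0 left_mem_uIcc
    have := h0.tendsto
    rw [intervalIntegral.integral_same] at this
    apply this.mono_left
    apply nhdsWithin_mono
    rw [Set.uIcc_of_le hT.le]
    exact Set.Ioc_subset_Icc_self
  -- integration by parts identity
  have hibp : ∀ a ∈ Set.Ioc (0:ℝ) T, ∫ t in a..T, γ t * Real.cos (ω*t)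
      = -(γ a * Real.sin (ω*a))/ω - (∫ t in a..T, g t)/ω := by
    intro a ha
    have hIcc : Set.Icc a T ⊆ Set.Ioc (0:ℝ) T := fun x hx => ⟨lt_of_lt_of_le ha.1 hx.1, hx.2⟩
    have huIcc : Set.uIcc a T ⊆ Set.uIcc (0:ℝ) T :=
      Set.uIcc_subset_uIcc (by rw [Set.uIcc_of_le hT.le]; exact ⟨ha.1.le, ha.2⟩) right_mem_uIcc
    have hco : ContinuousOn (fun t => γ t * (Real.sin (ω*t)/ω)) (Set.Icc a T) :=
      (hγc.mono hIcc).mul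
        ((Real.continuous_sin.comp (continuous_const.mul continuous_id)).div_const ω).continuousOn
    have hd' : ∀ x ∈ Set.Ioo a T, HasDerivWithinAt (fun t => γ t * (Real.sin (ω*t)/ω))
        (γ' x * (Real.sin (ω*x)/ω) + γ x * Real.cos (ω*x)) (Set.Ioi x) x := by
      intro x hx
      have hx' : x ∈ Set.Ioc (0:ℝ) T := ⟨ha.1.trans hx.1, hx.2.le⟩
      have hnb : Set.Ioc (0:ℝ) T ∈ 𝓝 x :=
        mem_of_superset (isOpen_Ioo.mem_nhds ⟨ha.1.trans hx.1, hx.2⟩) Set.Ioo_subset_Ioc_self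
      have hγd : HasDerivAt γ (γ' x) x := (hderiv x hx').hasDerivAt hnb
      have hsin : HasDerivAt (fun t => Real.sin (ω*t)) (Real.cos (ω*x) * ω) x := by
        have h1 : HasDerivAt (fun y : ℝ => ω * y) ω x := by
          simpa using (hasDerivAt_id x).const_mul ω
        exact (Real.hasDerivAt_sin (ω*x)).comp x h1
      have hg2 := hγd.mul (hsin.div_const ω)
      have heqd : γ' x * (Real.sin (ω*x)/ω) + γ x * (Real.cos (ω*x) * ω / ω)
          = γ' x * (Real.sin (ω*x)/ω) + γ x * Real.cos (ω*x) := by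
        rw [mul_div_cancel_right₀ _ hωne]
      rw [heqd] at hg2
      exact hg2.hasDerivWithinAt
    have hint1 : IntervalIntegrable (fun t => γ' t * (Real.sin (ω*t)/ω)) volume a T := by
      have h1 : IntervalIntegrable g volume a T := hgI.mono_set huIcc
      have h2 := h1.div_const ω
      have e : (fun t => g t / ω) = fun t => γ' t * (Real.sin (ω*t)/ω) := by
        funext t; rw [hgdef]; ring
      rwa [e] at h2
    have hint2 : IntervalIntegrable (fun t => γ t * Real.cos (ω*t)) volume a T :=
      hInt.mono_set huIcc
    have heq2 := intervalIntegral.integral_eq_sub_of_hasDeriv_right_of_le ha.2 hco hd'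
      (hint1.add hint2)
    have hsinT : Real.sin (ω*T) = 0 := by
      have : ω*T = (k:ℝ)*π := by rw [hωdef]; field_simp
      rw [this]
      exact_mod_cast Real.sin_nat_mul_pi k
    rw [intervalIntegral.integral_add hint1 hint2] at heq2
    have e3 : (∫ t in a..T, γ' t * (Real.sin (ω*t)/ω)) = (∫ t in a..T, g t)/ω := by
      rw [← intervalIntegral.integral_div]
      apply intervalIntegral.integral_congr
      intro t _
      rw [hgdef]; ring
    rw [e3, hsinT] at heq2
    have e4 : γ T * ((0:ℝ)/ω) - γ a * (Real.sin (ω*a)/ω)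
        = -(γ a * Real.sin (ω*a))/ω := by
      rw [zero_div, mul_zero, zero_sub]; ring
    rw [e4] at heq2
    linarith
  -- combine
  set Φ : ℝ → ℝ := fun a => (∫ t in (0:ℝ)..a, γ t * Real.cos (ω*t))
      + (-(γ a * Real.sin (ω*a))/ω - (∫ t in a..T, g t)/ω) with hΦdef
  have hΦeq : ∀ᶠ a in l, Φ a = ∫ t in (0:ℝ)..T, γ t * Real.cos (ω*t) := by
    filter_upwards [eventually_mem_nhdsWithin] with a ha
    rw [hΦdef]
    simp only
    rw [← hibp a ha]
    apply intervalIntegral.integral_add_adjacent_intervals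
    · exact hInt.mono_set (Set.uIcc_subset_uIcc left_mem_uIcc
        (by rw [Set.uIcc_of_le hT.le]; exact ⟨ha.1.le, ha.2⟩))
    · exact hInt.mono_set (Set.uIcc_subset_uIcc
        (by rw [Set.uIcc_of_le hT.le]; exact ⟨ha.1.le, ha.2⟩) right_mem_uIcc)
  have hΦtend : Tendsto Φ l (𝓝 (0 + (-(0:ℝ)/ω - (∫ t in (0:ℝ)..T, g t)/ω))) := by
    apply Tendsto.add hprim
    apply Tendsto.sub
    · exact (hbdry.neg.div_const ω)
    · exact hgtend.div_const ω
  have hval : (∫ t in (0:ℝ)..T, γ t * Real.cos (ω*t))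
      = 0 + (-(0:ℝ)/ω - (∫ t in (0:ℝ)..T, g t)/ω) :=
    tendsto_nhds_unique tendsto_const_nhds (Tendsto.congr' hΦeq hΦtend)
  rw [hval]
  have hkey : 0 ≤ ∫ t in (0:ℝ)..T, g t := aux_pos hT hk hγ'0 hanti (by rw [← hωdef]; exact hgI)
  have : 0 ≤ (∫ t in (0:ℝ)..T, g t)/ω := div_nonneg hkey hω.le
  simp only [neg_zero, zero_div, zero_sub, zero_add]
  linarith
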